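/- For every real α with 0 < α ≤ 1 and all real numbers x and y, one has (1 + α − (1+α)^(1/2))·x² + (1 + α − (1−α)/(1+α)^(1/2))·y² − 2α·x·y ≥ 0. -/

import Mathlib

/-- The quadratic form appearing in the `NS+MS` analysis is nonnegative. -/
theorem quadratic_form_nonneg (α x y : ℝ) (hα0 : 0 < α) (hα1 : α ≤ 1) :
    0 ≤ (1 + α - Real.sqrt (1 + α)) * x ^ 2
        + (1 + α - (1 - α) / Real.sqrt (1 + α)) * y ^ 2 - 2 * α * x * y := by
  set s := Real.sqrt (1 + α) with hs
  have hs2 : s ^ 2 = 1 + α := Real.sq_sqrt (by linarith)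
  have hs0 : 0 ≤ s := Real.sqrt_nonneg _
  have hs1 : 1 < s := by nlinarith
  have hsne : s ≠ 0 := by linarith
  have key : (s ^ 2 - s) * (s ^ 2 - (1 - α) / s) = α ^ 2 + (s - 1) ^ 2 := by
    field_simp
    linear_combination (s ^ 2 - s + α) * hs2
  have hA : 0 < s ^ 2 - s := by nlinarith
  rw [show (1 : ℝ) + α = s ^ 2 from hs2.symm]
  nlinarith [sq_nonneg ((s ^ 2 - s) * x - α * y), sq_nonneg ((s - 1) * y),
    hA, key, sq_nonneg y]
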